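/- In the Lee algebra V = ℚ[X]/(X² − 1), the Frobenius associativity identity (1 ⊗ m) ∘ (Δ ⊗ 1) = Δ ∘ m holds as maps V ⊗ V → V ⊗ V. -/

import Mathlib

open scoped TensorProduct

/-- The Lee algebra `V = ℚ[X]/(X² − 1)`. -/
abbrev LeeAlg : Type := AdjoinRoot ((Polynomial.X : Polynomial ℚ) ^ 2 - 1)

noncomputable abbrev LeeAlg.x : LeeAlg := AdjoinRoot.root _

open Polynomial in
lemma LeeAlg.x_mul_x : LeeAlg.x * LeeAlg.x = 1 := by
  have h : AdjoinRoot.mk ((X:ℚ[X])^2-1) ((X:ℚ[X])^2-1) = 0 := AdjoinRoot.mk_self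
  simp only [map_sub, map_pow, map_one, AdjoinRoot.mk_X, sub_eq_zero, pow_two] at h
  exact h

open Polynomial in
lemma LeeAlg.span (v : LeeAlg) : ∃ a b : ℚ, v = a • 1 + b • LeeAlg.x := by
  induction v using AdjoinRoot.induction_on with
  | ih p =>
    set q : ℚ[X] := X^2 - 1 with hq
    have hm : q.Monic := by
      simpa [hq] using Polynomial.monic_X_pow_sub_C (1:ℚ) (two_ne_zero)
    have hqdeg : q.degree = 2 := by rw [hq]; compute_degree!
    set r := p %ₘ q with hr
    have hdeg : r.degree ≤ 1 := by
      have := Polynomial.degree_modByMonic_lt p hm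
      rw [hqdeg] at this
      exact Order.lt_succ_iff.mp (by exact_mod_cast this)
    refine ⟨r.coeff 0, r.coeff 1, ?_⟩
    have hmk : AdjoinRoot.mk q p = AdjoinRoot.mk q r := by
      conv_lhs => rw [← Polynomial.modByMonic_add_div p q]
      simp [map_add, map_mul, AdjoinRoot.mk_self, hr]
    rw [hmk]
    conv_lhs => rw [Polynomial.eq_X_add_C_of_degree_le_one hdeg]
    rw [map_add, map_mul, AdjoinRoot.mk_X, AdjoinRoot.mk_C, AdjoinRoot.mk_C,
      Algebra.smul_def, Algebra.smul_def, mul_one, add_comm, AdjoinRoot.algebraMap_eq]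

/-- Frobenius associativity in the Lee algebra: `(1 ⊗ m) ∘ (Δ ⊗ 1) = Δ ∘ m` as maps
`V ⊗ V → V ⊗ V`, where `Δ(1) = 1⊗X + X⊗1` and `Δ(X) = X⊗X + 1⊗1`. -/
theorem lee_frobenius_identity
    (Δ : LeeAlg →ₗ[ℚ] LeeAlg ⊗[ℚ] LeeAlg)
    (hΔ1 : Δ 1 = 1 ⊗ₜ[ℚ] LeeAlg.x + LeeAlg.x ⊗ₜ[ℚ] 1)
    (hΔX : Δ LeeAlg.x = LeeAlg.x ⊗ₜ[ℚ] LeeAlg.x + 1 ⊗ₜ[ℚ] 1) :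
    (TensorProduct.map LinearMap.id (LinearMap.mul' ℚ LeeAlg)) ∘ₗ
      (TensorProduct.assoc ℚ LeeAlg LeeAlg LeeAlg).toLinearMap ∘ₗ
      (TensorProduct.map Δ LinearMap.id)
    = Δ ∘ₗ LinearMap.mul' ℚ LeeAlg := by
  apply TensorProduct.ext'
  intro u v
  obtain ⟨a, b, rfl⟩ := LeeAlg.span u
  obtain ⟨c, d, rfl⟩ := LeeAlg.span v
  simp only [LinearMap.comp_apply, LinearEquiv.coe_coe, TensorProduct.map_tmul,
    LinearMap.id_coe, id_eq, map_add, map_smul, hΔ1, hΔX,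
    TensorProduct.add_tmul, TensorProduct.smul_tmul', TensorProduct.smul_tmul,
    TensorProduct.assoc_tmul, TensorProduct.tmul_add, LinearMap.mul'_apply,
    smul_eq_mul, mul_one, one_mul, LeeAlg.x_mul_x, smul_add, smul_smul,
    add_mul, mul_add]
  simp only [mul_smul_comm, mul_one, one_mul, LeeAlg.x_mul_x, map_smul, hΔ1, hΔX]
  simp only [TensorProduct.tmul_smul, smul_add]
  abel
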